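/- arXiv:0905.3098 — 2 statements merged into one kernel-verified Lean document; each statement's English description precedes it below -/
import Mathlib

section
/- Let (X,T) be a minimal distal system and d ≥ 1. Define a relation ∼ on Q^[d-1](X) by x ∼ x' iff the concatenated point (x, x') ∈ X^{2^d} belongs to Q^[d](X). Then ∼ is an equivalence relation. -/
open Filter Topology

noncomputable section

def dotP {d : ℕ} (n : Fin d → ℤ) (ε : Fin d → Bool) : ℤ :=
  ∑ i, if ε i then n i else 0

def cubeQ (X : Type*) [TopologicalSpace X] (T : X ≃ₜ X) (d : ℕ) :
    Set ((Fin d → Bool) → X) :=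
  closure {y | ∃ (x : X) (n : Fin d → ℤ), y = fun ε => (T.toEquiv ^ dotP n ε) x}

/-- The point of `X^{2^{m+1}}` whose restriction to `{ε : ε_{m+1} = 0}` is `u` and to
`{ε : ε_{m+1} = 1}` is `v`. -/
def concat {X : Type*} {m : ℕ} (u v : (Fin m → Bool) → X) : (Fin (m + 1) → Bool) → X :=
  fun ε => if ε (Fin.last m) then v (fun i => ε i.castSucc) else u (fun i => ε i.castSucc)

namespace CubeAux

lemma dotP_succ {d : ℕ} (n : Fin (d + 1) → ℤ) (ε : Fin (d + 1) → Bool) :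
    dotP n ε = dotP (fun i => n i.castSucc) (fun i => ε i.castSucc)
      + (if ε (Fin.last d) then n (Fin.last d) else 0) := by
  unfold dotP
  rw [Fin.sum_univ_castSucc]

lemma dotP_snoc {d : ℕ} (n : Fin d → ℤ) (k : ℤ) (ε : Fin (d + 1) → Bool) :
    dotP (Fin.snoc n k) ε = dotP n (fun i => ε i.castSucc)
      + (if ε (Fin.last d) then k else 0) := by
  rw [dotP_succ]
  simp [Fin.snoc_last, Fin.snoc_castSucc]

lemma dotP_add {d : ℕ} (n m : Fin d → ℤ) (ε : Fin d → Bool) :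
    dotP (fun i => n i + m i) ε = dotP n ε + dotP m ε := by
  unfold dotP
  rw [← Finset.sum_add_distrib]
  refine Finset.sum_congr rfl fun i _ => ?_
  by_cases h : ε i <;> simp [h]

lemma dotP_zero {d : ℕ} (ε : Fin d → Bool) : dotP (fun _ => (0:ℤ)) ε = 0 := by
  unfold dotP; simp

variable {X : Type*} [MetricSpace X] [CompactSpace X] (T : X ≃ₜ X)

abbrev Tpow (k : ℤ) (x : X) : X := (T.toEquiv ^ k) x

lemma tpow_tpow (a b : ℤ) (x : X) : Tpow T a (Tpow T b x) = Tpow T (a + b) x := by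
  show (T.toEquiv ^ a) ((T.toEquiv ^ b) x) = (T.toEquiv ^ (a + b)) x
  rw [zpow_add, Equiv.Perm.mul_apply]

lemma tpow_zero (x : X) : Tpow T 0 x = x := by simp [Tpow]

/-- The basic maps generating the Ellis-type semigroup. -/
def gmap (d : ℕ) (n₀ : ℤ) (n : Fin d → ℤ) :
    ((Fin d → Bool) → X) → ((Fin d → Bool) → X) :=
  fun y ε => Tpow T (n₀ + dotP n ε) (y ε)

def SS (d : ℕ) : Set (((Fin d → Bool) → X) → ((Fin d → Bool) → X)) :=
  {f | ∃ n₀ n, f = gmap T d n₀ n}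

def EE (d : ℕ) : Set (((Fin d → Bool) → X) → ((Fin d → Bool) → X)) :=
  closure (SS T d)

lemma tpow_cont (k : ℤ) : Continuous fun x : X => Tpow T k x := by
  induction k using Int.induction_on with
  | zero => simpa [Tpow] using continuous_id'
  | succ n ih =>
      have h : (fun x : X => Tpow T ((n : ℤ) + 1) x) = fun x => Tpow T n (T x) := by
        funext x
        rw [← tpow_tpow T (n : ℤ) 1 x]
        congr 1
      rw [h]; exact ih.comp T.continuous
  | pred n ih =>
      have h : (fun x : X => Tpow T (-(n : ℤ) - 1) x) = fun x => Tpow T (-(n : ℤ)) (T.symm x) := by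
        funext x
        rw [sub_eq_add_neg, ← tpow_tpow T (-(n : ℤ)) (-1) x]
        congr 1
      rw [h]; exact ih.comp T.continuous_symm

lemma gmap_cont (d : ℕ) (n₀ : ℤ) (n : Fin d → ℤ) : Continuous (gmap T d n₀ n) := by
  refine continuous_pi fun ε => ?_
  exact (tpow_cont T _).comp (continuous_apply ε)

lemma SS_cont {d : ℕ} {f : ((Fin d → Bool) → X) → ((Fin d → Bool) → X)}
    (hf : f ∈ SS T d) : Continuous f := by
  obtain ⟨n₀, n, rfl⟩ := hf
  exact gmap_cont T d n₀ n

lemma id_mem_SS (d : ℕ) : id ∈ SS T d := by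
  refine ⟨0, fun _ => 0, ?_⟩
  funext y ε
  simp [gmap, dotP_zero, tpow_zero]

lemma SS_comp {d : ℕ} {f g : ((Fin d → Bool) → X) → ((Fin d → Bool) → X)}
    (hf : f ∈ SS T d) (hg : g ∈ SS T d) : f ∘ g ∈ SS T d := by
  obtain ⟨n₀, n, rfl⟩ := hf
  obtain ⟨m₀, m, rfl⟩ := hg
  refine ⟨n₀ + m₀, fun i => n i + m i, ?_⟩
  funext y ε
  show Tpow T (n₀ + dotP n ε) (Tpow T (m₀ + dotP m ε) (y ε))
      = Tpow T (n₀ + m₀ + dotP (fun i => n i + m i) ε) (y ε)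
  rw [tpow_tpow, dotP_add]
  congr 1
  ring

lemma comp_mem {d : ℕ} {p q : ((Fin d → Bool) → X) → ((Fin d → Bool) → X)}
    (hp : p ∈ EE T d) (hq : q ∈ EE T d) : p ∘ q ∈ EE T d := by
  have step1 : ∀ f ∈ SS T d, f ∘ q ∈ EE T d := by
    intro f hf
    have hc : Continuous fun h : ((Fin d → Bool) → X) → ((Fin d → Bool) → X) => f ∘ h := by
      refine continuous_pi fun y => ?_
      exact (SS_cont T hf).comp (continuous_apply y)
    exact map_mem_closure hc hq fun g hg => SS_comp T hf hg
  have hc2 : Continuous fun h : ((Fin d → Bool) → X) → ((Fin d → Bool) → X) => h ∘ q := by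
    refine continuous_pi fun y => ?_
    exact continuous_apply (q y)
  have := map_mem_closure hc2 hp step1
  simpa only [EE, closure_closure] using this

/-- Distality hypothesis. -/
def DistalHyp : Prop := ∀ x y : X, x ≠ y →
  ∃ δ > 0, ∀ n : ℤ, δ ≤ dist ((T.toEquiv ^ n) x) ((T.toEquiv ^ n) y)

section Distal
variable {T}

/-- Approximate an Ellis element at two points by a generator. -/
lemma approx2 {d : ℕ} {p : ((Fin d → Bool) → X) → ((Fin d → Bool) → X)}
    (hp : p ∈ EE T d) (y₁ y₂ : (Fin d → Bool) → X) {r : ℝ} (hr : 0 < r) :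
    ∃ f ∈ SS T d, dist (f y₁) (p y₁) < r ∧ dist (f y₂) (p y₂) < r := by
  have hopen : IsOpen {h : ((Fin d → Bool) → X) → ((Fin d → Bool) → X) |
      dist (h y₁) (p y₁) < r ∧ dist (h y₂) (p y₂) < r} := by
    refine IsOpen.inter ?_ ?_
    · exact isOpen_lt (Continuous.dist (continuous_apply y₁) continuous_const) continuous_const
    · exact isOpen_lt (Continuous.dist (continuous_apply y₂) continuous_const) continuous_const
  have hmem : p ∈ {h : ((Fin d → Bool) → X) → ((Fin d → Bool) → X) |
      dist (h y₁) (p y₁) < r ∧ dist (h y₂) (p y₂) < r} := by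
    refine Set.mem_setOf_eq ▸ ⟨?_, ?_⟩ <;> simpa using hr
  obtain ⟨f, hf1, hf2⟩ := _root_.mem_closure_iff.mp hp _ hopen hmem
  exact ⟨f, hf2, hf1.1, hf1.2⟩

/-- Distality for the product system: generators separate distinct points uniformly. -/
lemma SS_distal (hdistal : DistalHyp T) {d : ℕ} {y y' : (Fin d → Bool) → X} (hne : y ≠ y') :
    ∃ δ > 0, ∀ f ∈ SS T d, δ ≤ dist (f y) (f y') := by
  obtain ⟨ε, hε⟩ := Function.ne_iff.mp hne
  obtain ⟨δ, hδ, hδall⟩ := hdistal (y ε) (y' ε) hε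
  refine ⟨δ, hδ, fun f hf => ?_⟩
  obtain ⟨n₀, n, rfl⟩ := hf
  calc δ ≤ dist (gmap T d n₀ n y ε) (gmap T d n₀ n y' ε) := hδall _
    _ ≤ dist (gmap T d n₀ n y) (gmap T d n₀ n y') := dist_le_pi_dist _ _ ε

lemma EE_inj (hdistal : DistalHyp T) {d : ℕ} {p : ((Fin d → Bool) → X) → ((Fin d → Bool) → X)}
    (hp : p ∈ EE T d) : Function.Injective p := by
  intro y y' h
  by_contra hne
  obtain ⟨δ, hδ, hall⟩ := SS_distal hdistal hne
  obtain ⟨f, hf, h1, h2⟩ := approx2 hp y y' (half_pos hδ)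
  have hlt : dist (f y) (f y') < δ := by
    have h2' : dist (p y') (f y') < δ / 2 := by rwa [dist_comm]
    calc dist (f y) (f y') ≤ dist (f y) (p y) + dist (p y) (f y') := dist_triangle _ _ _
      _ = dist (f y) (p y) + dist (p y') (f y') := by rw [h]
      _ < δ/2 + δ/2 := add_lt_add h1 h2'
      _ = δ := by ring
  linarith [hall f hf]

/-- Ellis elements act coordinatewise. -/
lemma EE_local {d : ℕ} {p : ((Fin d → Bool) → X) → ((Fin d → Bool) → X)}
    (hp : p ∈ EE T d) {y y' : (Fin d → Bool) → X} {ε : Fin d → Bool}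
    (h : y ε = y' ε) : p y ε = p y' ε := by
  by_contra hne
  have hpos : 0 < dist (p y ε) (p y' ε) := dist_pos.mpr hne
  obtain ⟨f, hf, h1, h2⟩ := approx2 hp y y' (half_pos hpos)
  obtain ⟨n₀, n, rfl⟩ := hf
  have heq : gmap T d n₀ n y ε = gmap T d n₀ n y' ε := by
    unfold gmap; rw [h]
  have c1 : dist (p y ε) (gmap T d n₀ n y ε) < dist (p y ε) (p y' ε) / 2 :=
    lt_of_le_of_lt (by rw [dist_comm]; exact dist_le_pi_dist _ _ ε) h1
  have c2 : dist (gmap T d n₀ n y' ε) (p y' ε) < dist (p y ε) (p y' ε) / 2 :=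
    lt_of_le_of_lt (dist_le_pi_dist _ _ ε) h2
  have := dist_triangle4 (p y ε) (gmap T d n₀ n y ε) (gmap T d n₀ n y' ε) (p y' ε)
  rw [heq] at c1 this
  simp only [dist_self] at this
  linarith

/-- Every Ellis element has a two-sided inverse in the Ellis semigroup. -/
lemma EE_inv (hdistal : DistalHyp T) {d : ℕ} {p : ((Fin d → Bool) → X) → ((Fin d → Bool) → X)}
    (hp : p ∈ EE T d) : ∃ q ∈ EE T d, q ∘ p = id ∧ p ∘ q = id := by
  -- first: every element has a left inverse
  have key : ∀ p' ∈ EE T d, ∃ q ∈ EE T d, q ∘ p' = id := by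
    intro p' hp'
    let L : Set (((Fin d → Bool) → X) → ((Fin d → Bool) → X)) :=
      (fun q => q ∘ p') '' EE T d
    have hLsub : L ⊆ EE T d := by
      rintro _ ⟨q, hq, rfl⟩
      exact comp_mem T hq hp'
    have hLmul : ∀ a ∈ L, ∀ b ∈ L, a ∘ b ∈ L := by
      rintro _ ⟨q₁, hq₁, rfl⟩ _ ⟨q₂, hq₂, rfl⟩
      exact ⟨q₁ ∘ (p' ∘ q₂), comp_mem T hq₁ (comp_mem T hp' hq₂), rfl⟩
    have hEcomp : IsCompact (EE T d) := isClosed_closure.isCompact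
    have hLcomp : IsCompact L := by
      refine hEcomp.image ?_
      exact continuous_pi fun y => continuous_apply (p' y)
    letI : Semigroup L :=
      { mul := fun a b => ⟨a.1 ∘ b.1, hLmul _ a.2 _ b.2⟩
        mul_assoc := fun a b c => rfl }
    haveI : CompactSpace L := isCompact_iff_compactSpace.mp hLcomp
    haveI : Nonempty L := ⟨⟨id ∘ p', ⟨id, subset_closure (id_mem_SS T d), rfl⟩⟩⟩
    have hcont : ∀ r : L, Continuous (· * r) := by
      intro r
      refine Continuous.subtype_mk ?_ _
      exact (continuous_pi fun y => (continuous_apply (r.1 y)).comp continuous_subtype_val)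
    obtain ⟨⟨w, hw⟩, hwid⟩ := exists_idempotent_of_compact_t2_of_continuous_mul_left hcont
    have hww : w ∘ w = w := congrArg Subtype.val hwid
    have hwE : w ∈ EE T d := hLsub hw
    have hwidid : w = id := by
      funext y
      exact EE_inj hdistal hwE (congrFun hww y)
    obtain ⟨q, hq, hqp⟩ := hw
    have hqp' : q ∘ p' = w := hqp
    exact ⟨q, hq, by rw [hqp', hwidid]⟩
  obtain ⟨q, hq, hqp⟩ := key p hp
  obtain ⟨r, hr, hrq⟩ := key q hq
  have hpr : p = r := by
    have : r ∘ (q ∘ p) = r := by rw [hqp]; rfl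
    rw [← this, ← Function.comp_assoc, hrq]
    rfl
  exact ⟨q, hq, hqp, by rw [hpr, hrq]⟩

end Distal



/-- lower face restriction -/
def lowF {X : Type*} {d : ℕ} (y : (Fin (d + 1) → Bool) → X) : (Fin d → Bool) → X :=
  fun ε => y (Fin.snoc ε false)

/-- upper face restriction -/
def upF {X : Type*} {d : ℕ} (y : (Fin (d + 1) → Bool) → X) : (Fin d → Bool) → X :=
  fun ε => y (Fin.snoc ε true)

lemma snoc_eq {d : ℕ} (ε : Fin (d + 1) → Bool) :
    Fin.snoc (fun i => ε i.castSucc) (ε (Fin.last d)) = ε := by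
  exact Fin.snoc_init_self ε

lemma concat_apply_snoc_false {X : Type*} {d : ℕ} (u v : (Fin d → Bool) → X)
    (ε : Fin d → Bool) : concat u v (Fin.snoc ε false) = u ε := by
  unfold concat
  simp [Fin.snoc_last, Fin.snoc_castSucc]

lemma concat_apply_snoc_true {X : Type*} {d : ℕ} (u v : (Fin d → Bool) → X)
    (ε : Fin d → Bool) : concat u v (Fin.snoc ε true) = v ε := by
  unfold concat
  simp [Fin.snoc_last, Fin.snoc_castSucc]

lemma lowF_concat {X : Type*} {d : ℕ} (u v : (Fin d → Bool) → X) : lowF (concat u v) = u := by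
  funext ε; exact concat_apply_snoc_false u v ε

lemma upF_concat {X : Type*} {d : ℕ} (u v : (Fin d → Bool) → X) : upF (concat u v) = v := by
  funext ε; exact concat_apply_snoc_true u v ε

lemma concat_lowF_upF {X : Type*} {d : ℕ} (y : (Fin (d + 1) → Bool) → X) :
    concat (lowF y) (upF y) = y := by
  funext ε
  rw [← snoc_eq ε]
  cases h : ε (Fin.last d)
  · rw [concat_apply_snoc_false]; rfl
  · rw [concat_apply_snoc_true]; rfl

lemma concat_cont {X : Type*} [TopologicalSpace X] {d : ℕ} {k : ℤ} : True := trivial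


/-- Base (pre-closure) set of the cube construction. -/
def BB (d : ℕ) : Set ((Fin d → Bool) → X) :=
  {y | ∃ (x : X) (n : Fin d → ℤ), y = fun ε => Tpow T (dotP n ε) x}

lemma cubeQ_eq_BB (d : ℕ) : cubeQ X T d = closure (BB T d) := rfl

lemma orbit_subset_BB (x₀ : X) (d : ℕ) :
    (fun f => f (fun _ => x₀)) '' SS T d ⊆ BB T d := by
  rintro _ ⟨f, ⟨n₀, n, rfl⟩, rfl⟩
  refine ⟨Tpow T n₀ x₀, n, ?_⟩
  funext ε
  show Tpow T (n₀ + dotP n ε) x₀ = Tpow T (dotP n ε) (Tpow T n₀ x₀)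
  rw [tpow_tpow]
  congr 1
  ring

lemma dotP_fin0 (n : Fin 0 → ℤ) (ε : Fin 0 → Bool) : dotP n ε = 0 := by
  unfold dotP; simp

lemma cubeQ_eq_closure_orbit
    (hmin : ∀ x : X, Dense (Set.range fun n : ℤ => (T.toEquiv ^ n) x))
    (x₀ : X) : ∀ d, cubeQ X T d = closure ((fun f => f (fun _ => x₀)) '' SS T d) := by
  intro d
  induction d with
  | zero =>
    have Ccont : Continuous (fun x : X => (fun _ : Fin 0 → Bool => x)) :=
      continuous_pi fun _ => continuous_id
    have Cinj : Function.Injective (fun x : X => (fun _ : Fin 0 → Bool => x)) := by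
      intro a b h
      exact congrFun h (fun i => i.elim0)
    have hC := Ccont.isClosedEmbedding Cinj
    have horb : (fun f => f (fun _ => x₀)) '' SS T 0
        = (fun x : X => (fun _ : Fin 0 → Bool => x)) ''
            (Set.range fun n : ℤ => Tpow T n x₀) := by
      ext z
      constructor
      · rintro ⟨f, ⟨n₀, n, rfl⟩, rfl⟩
        refine ⟨Tpow T n₀ x₀, ⟨n₀, rfl⟩, ?_⟩
        funext ε
        show Tpow T n₀ x₀ = Tpow T (n₀ + dotP n ε) x₀
        rw [dotP_fin0, add_zero]
      · rintro ⟨_, ⟨n₀, rfl⟩, rfl⟩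
        refine ⟨gmap T 0 n₀ (fun i => i.elim0), ⟨n₀, _, rfl⟩, ?_⟩
        funext ε
        show Tpow T (n₀ + dotP _ ε) x₀ = Tpow T n₀ x₀
        rw [dotP_fin0, add_zero]
    have hBB : BB T 0 = Set.range (fun x : X => (fun _ : Fin 0 → Bool => x)) := by
      ext z
      constructor
      · rintro ⟨x, n, rfl⟩
        refine ⟨x, ?_⟩
        funext ε
        show x = Tpow T (dotP n ε) x
        rw [dotP_fin0]
        exact (tpow_zero T x).symm
      · rintro ⟨x, rfl⟩
        refine ⟨x, fun i => i.elim0, ?_⟩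
        funext ε
        show x = Tpow T (dotP _ ε) x
        rw [dotP_fin0]
        exact (tpow_zero T x).symm
    rw [cubeQ_eq_BB, hBB, horb, hC.closure_image_eq, (hmin x₀).closure_eq,
      Set.image_univ, hC.isClosed_range.closure_eq]
  | succ d ih =>
    apply Set.Subset.antisymm
    · rw [cubeQ_eq_BB]
      refine closure_minimal ?_ isClosed_closure
      rintro _ ⟨x, n, rfl⟩
      have hc : (fun ε => Tpow T (dotP (fun i => n i.castSucc) ε) x) ∈ cubeQ X T d := by
        rw [cubeQ_eq_BB]
        exact subset_closure ⟨x, fun i => n i.castSucc, rfl⟩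
      set k := n (Fin.last d) with hk
      set Fk : ((Fin d → Bool) → X) → ((Fin (d+1) → Bool) → X) :=
        fun a => concat a (fun ε => Tpow T k (a ε)) with hFk
      have hFkcont : Continuous Fk := by
        refine continuous_pi fun ε => ?_
        show Continuous fun a : (Fin d → Bool) → X =>
          if ε (Fin.last d) then Tpow T k (a (fun i => ε i.castSucc))
          else a (fun i => ε i.castSucc)
        refine continuous_if_const _ (fun _ => ?_) (fun _ => ?_)
        · exact (tpow_cont T k).comp (continuous_apply _)
        · exact continuous_apply _
      have hyeq : (fun ε => Tpow T (dotP n ε) x)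
          = Fk (fun ε => Tpow T (dotP (fun i => n i.castSucc) ε) x) := by
        funext ε
        show Tpow T (dotP n ε) x =
          if ε (Fin.last d) then
            Tpow T k (Tpow T (dotP (fun i => n i.castSucc) (fun i => ε i.castSucc)) x)
          else Tpow T (dotP (fun i => n i.castSucc) (fun i => ε i.castSucc)) x
        rw [dotP_succ n ε]
        cases h : ε (Fin.last d)
        · simp only [h, Bool.false_eq_true, if_false, add_zero]
        · simp only [h, if_true, tpow_tpow]
          congr 1
          ring
      rw [hyeq]
      have h1 : Fk (fun ε => Tpow T (dotP (fun i => n i.castSucc) ε) x)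
          ∈ Fk '' (closure ((fun f => f (fun _ => x₀)) '' SS T d)) := by
        exact ⟨_, by rw [← ih]; exact hc, rfl⟩
      have h2 := (image_closure_subset_closure_image hFkcont) h1
      refine closure_mono ?_ h2
      rintro _ ⟨_, ⟨f, ⟨n₀, nn, rfl⟩, rfl⟩, rfl⟩
      refine ⟨gmap T (d+1) n₀ (Fin.snoc nn k), ⟨n₀, _, rfl⟩, ?_⟩
      funext ε
      symm
      show (if ε (Fin.last d) then
              Tpow T k (gmap T d n₀ nn (fun _ => x₀) (fun i => ε i.castSucc))
            else gmap T d n₀ nn (fun _ => x₀) (fun i => ε i.castSucc))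
          = Tpow T (n₀ + dotP (Fin.snoc nn k) ε) x₀
      rw [dotP_snoc]
      cases h : ε (Fin.last d)
      · simp only [h, Bool.false_eq_true, if_false, add_zero]
        rfl
      · simp only [h, if_true]
        show Tpow T k (Tpow T (n₀ + dotP nn (fun i => ε i.castSucc)) x₀) = _
        rw [tpow_tpow]
        congr 1
        ring
    · refine closure_minimal ?_ ?_
      · exact (orbit_subset_BB T x₀ (d+1)).trans subset_closure
      · rw [cubeQ_eq_BB]
        exact isClosed_closure

lemma cubeQ_eq_image_EE
    (hmin : ∀ x : X, Dense (Set.range fun n : ℤ => (T.toEquiv ^ n) x))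
    (x₀ : X) (d : ℕ) :
    cubeQ X T d = (fun p => p (fun _ => x₀)) '' EE T d := by
  rw [cubeQ_eq_closure_orbit T hmin x₀ d]
  apply Set.Subset.antisymm
  · refine closure_minimal (Set.image_mono subset_closure) ?_
    exact ((isClosed_closure.isCompact).image (continuous_apply _)).isClosed
  · exact image_closure_subset_closure_image (continuous_apply _)

/-- Ellis elements act on concatenations componentwise. -/
lemma EE_split {d : ℕ} {p : ((Fin (d+1) → Bool) → X) → ((Fin (d+1) → Bool) → X)}
    (hp : p ∈ EE T (d+1)) (a b : (Fin d → Bool) → X) :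
    p (concat a b) = concat (lowF (p (concat a a))) (upF (p (concat b b))) := by
  funext ε
  have hsn := snoc_eq ε
  cases h : ε (Fin.last d)
  · have hε : (Fin.snoc (fun i => ε i.castSucc) false : Fin (d+1) → Bool) = ε := by
      rw [← h]; exact hsn
    have h1 : concat a b ε = concat a a ε := by
      show (if ε (Fin.last d) then b _ else a _) = (if ε (Fin.last d) then a _ else a _)
      simp only [h, Bool.false_eq_true, if_false]
    have h2 : concat (lowF (p (concat a a))) (upF (p (concat b b))) ε
        = p (concat a a) ε := by
      show (if ε (Fin.last d) then _ else lowF (p (concat a a)) (fun i => ε i.castSucc)) = _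
      simp only [h, Bool.false_eq_true, if_false]
      show p (concat a a) (Fin.snoc (fun i => ε i.castSucc) false) = _
      rw [hε]
    rw [h2]
    exact EE_local hp h1
  · have hε : (Fin.snoc (fun i => ε i.castSucc) true : Fin (d+1) → Bool) = ε := by
      rw [← h]; exact hsn
    have h1 : concat a b ε = concat b b ε := by
      show (if ε (Fin.last d) then b _ else a _) = (if ε (Fin.last d) then b _ else b _)
      simp only [h, if_true]
    have h2 : concat (lowF (p (concat a a))) (upF (p (concat b b))) ε
        = p (concat b b) ε := by
      show (if ε (Fin.last d) then upF (p (concat b b)) (fun i => ε i.castSucc) else _) = _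
      simp only [h, if_true]
      show p (concat b b) (Fin.snoc (fun i => ε i.castSucc) true) = _
      rw [hε]
    rw [h2]
    exact EE_local hp h1

/-- The "doubled lower component" of an Ellis element is again an Ellis element. -/
lemma EE_diagdbl {d : ℕ} {q : ((Fin (d+1) → Bool) → X) → ((Fin (d+1) → Bool) → X)}
    (hq : q ∈ EE T (d+1)) :
    (fun y => concat (lowF (q (concat (lowF y) (lowF y))))
      (lowF (q (concat (upF y) (upF y))))) ∈ EE T (d+1) := by
  set Φ : (((Fin (d+1) → Bool) → X) → ((Fin (d+1) → Bool) → X)) →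
      (((Fin (d+1) → Bool) → X) → ((Fin (d+1) → Bool) → X)) :=
    fun f y => concat (lowF (f (concat (lowF y) (lowF y))))
      (lowF (f (concat (upF y) (upF y)))) with hΦ
  have hcont : Continuous Φ := by
    refine continuous_pi fun y => continuous_pi fun ε => ?_
    show Continuous fun f : ((Fin (d+1) → Bool) → X) → ((Fin (d+1) → Bool) → X) =>
      if ε (Fin.last d) then
        f (concat (upF y) (upF y)) (Fin.snoc (fun i => ε i.castSucc) false)
      else f (concat (lowF y) (lowF y)) (Fin.snoc (fun i => ε i.castSucc) false)
    refine continuous_if_const _ (fun _ => ?_) (fun _ => ?_)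
    · exact (continuous_apply _).comp (continuous_apply _)
    · exact (continuous_apply _).comp (continuous_apply _)
  have hmaps : Set.MapsTo Φ (SS T (d+1)) (SS T (d+1)) := by
    rintro f ⟨n₀, n, rfl⟩
    refine ⟨n₀, Fin.snoc (fun i => n i.castSucc) 0, ?_⟩
    funext y ε
    show (if ε (Fin.last d) then
        gmap T (d+1) n₀ n (concat (upF y) (upF y)) (Fin.snoc (fun i => ε i.castSucc) false)
      else gmap T (d+1) n₀ n (concat (lowF y) (lowF y)) (Fin.snoc (fun i => ε i.castSucc) false))
      = Tpow T (n₀ + dotP (Fin.snoc (fun i => n i.castSucc) 0) ε) (y ε)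
    have hdot : dotP n (Fin.snoc (fun i => ε i.castSucc) false)
        = dotP (fun i => n i.castSucc) (fun i => ε i.castSucc) := by
      rw [dotP_succ]
      simp [Fin.snoc_last, Fin.snoc_castSucc]
    have hdot2 : dotP (Fin.snoc (fun i => n i.castSucc) 0) ε
        = dotP (fun i => n i.castSucc) (fun i => ε i.castSucc) := by
      rw [dotP_snoc]
      cases h : ε (Fin.last d) <;> simp
    rw [hdot2]
    cases h : ε (Fin.last d)
    · simp only [h, Bool.false_eq_true, if_false]
      show Tpow T (n₀ + dotP n (Fin.snoc (fun i => ε i.castSucc) false))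
          ((concat (lowF y) (lowF y)) (Fin.snoc (fun i => ε i.castSucc) false)) = _
      rw [hdot, concat_apply_snoc_false]
      show _ = Tpow T _ (y ε)
      congr 1
      show y (Fin.snoc (fun i => ε i.castSucc) false) = y ε
      congr 1
      rw [← h]; exact snoc_eq ε
    · simp only [h, if_true]
      show Tpow T (n₀ + dotP n (Fin.snoc (fun i => ε i.castSucc) false))
          ((concat (upF y) (upF y)) (Fin.snoc (fun i => ε i.castSucc) false)) = _
      rw [hdot, concat_apply_snoc_false]
      show _ = Tpow T _ (y ε)
      congr 1
      show y (Fin.snoc (fun i => ε i.castSucc) true) = y ε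
      congr 1
      rw [← h]; exact snoc_eq ε
  exact map_mem_closure hcont hq hmaps

/-- Reflexivity. -/
lemma concat_self_mem {d : ℕ} {u : (Fin d → Bool) → X} (hu : u ∈ cubeQ X T d) :
    concat u u ∈ cubeQ X T (d+1) := by
  have hc : Continuous fun a : (Fin d → Bool) → X => concat a a := by
    refine continuous_pi fun ε => ?_
    show Continuous fun a : (Fin d → Bool) → X =>
      if ε (Fin.last d) then a (fun i => ε i.castSucc) else a (fun i => ε i.castSucc)
    refine continuous_if_const _ (fun _ => ?_) (fun _ => ?_) <;> exact continuous_apply _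
  have hmaps : Set.MapsTo (fun a : (Fin d → Bool) → X => concat a a)
      (BB T d) (BB T (d+1)) := by
    rintro a ⟨x, n, rfl⟩
    refine ⟨x, Fin.snoc n 0, ?_⟩
    funext ε
    show (if ε (Fin.last d) then Tpow T (dotP n (fun i => ε i.castSucc)) x
      else Tpow T (dotP n (fun i => ε i.castSucc)) x) = Tpow T (dotP (Fin.snoc n 0) ε) x
    rw [ite_self, dotP_snoc]
    cases h : ε (Fin.last d) <;> simp
  rw [cubeQ_eq_BB] at hu ⊢
  exact map_mem_closure (f := fun a : (Fin d → Bool) → X => concat a a) hc hu hmaps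

/-- Symmetry. -/
lemma concat_symm_mem {d : ℕ} {u v : (Fin d → Bool) → X}
    (h : concat u v ∈ cubeQ X T (d+1)) : concat v u ∈ cubeQ X T (d+1) := by
  classical
  set R : ((Fin (d+1) → Bool) → X) → ((Fin (d+1) → Bool) → X) :=
    fun y ε => y (Function.update ε (Fin.last d) (!(ε (Fin.last d)))) with hR
  have hup : ∀ ε : Fin (d+1) → Bool, ∀ i : Fin d,
      Function.update ε (Fin.last d) (!(ε (Fin.last d))) i.castSucc = ε i.castSucc := by
    intro ε i
    exact Function.update_of_ne (Fin.castSucc_lt_last i).ne _ _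
  have hul : ∀ ε : Fin (d+1) → Bool,
      Function.update ε (Fin.last d) (!(ε (Fin.last d))) (Fin.last d) = !(ε (Fin.last d)) := by
    intro ε
    exact Function.update_self _ _ _
  have hRc : Continuous R := continuous_pi fun ε => continuous_apply _
  have hmaps : Set.MapsTo R (BB T (d+1)) (BB T (d+1)) := by
    rintro y ⟨x, n, rfl⟩
    refine ⟨Tpow T (n (Fin.last d)) x,
      Fin.snoc (fun i => n i.castSucc) (-(n (Fin.last d))), ?_⟩
    funext ε
    show Tpow T (dotP n (Function.update ε (Fin.last d) (!(ε (Fin.last d))))) x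
      = Tpow T (dotP (Fin.snoc (fun i => n i.castSucc) (-(n (Fin.last d)))) ε)
          (Tpow T (n (Fin.last d)) x)
    rw [tpow_tpow, dotP_snoc, dotP_succ n]
    have e1 : (fun i : Fin d =>
        Function.update ε (Fin.last d) (!(ε (Fin.last d))) i.castSucc)
        = fun i => ε i.castSucc := by
      funext i; exact hup ε i
    rw [e1, hul]
    congr 1
    cases h' : ε (Fin.last d) <;> simp <;> ring
  have hRconcat : R (concat u v) = concat v u := by
    funext ε
    show concat u v (Function.update ε (Fin.last d) (!(ε (Fin.last d)))) = concat v u ε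
    show (if Function.update ε (Fin.last d) (!(ε (Fin.last d))) (Fin.last d) then _ else _)
      = (if ε (Fin.last d) then _ else _)
    rw [hul]
    have e1 : (fun i : Fin d =>
        Function.update ε (Fin.last d) (!(ε (Fin.last d))) i.castSucc)
        = fun i => ε i.castSucc := by
      funext i; exact hup ε i
    rw [e1]
    cases h' : ε (Fin.last d)
    · simp only [h', Bool.not_false, if_true, Bool.false_eq_true, if_false]
    · simp only [h', Bool.not_true, Bool.false_eq_true, if_false, if_true]
  have := map_mem_closure hRc h hmaps
  rwa [hRconcat] at this

end CubeAux

open CubeAux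

/-- In a minimal distal system, the relation `u ∼ v ⟺ (u,v) ∈ Q^[d]` on `Q^[d-1]`
is an equivalence relation (here `d = m + 1 ≥ 1`). -/
theorem cubeQ_concat_equivalence
    {X : Type*} [MetricSpace X] [CompactSpace X] (T : X ≃ₜ X) (m : ℕ)
    (hmin : ∀ x : X, Dense (Set.range fun n : ℤ => (T.toEquiv ^ n) x))
    (hdistal : ∀ x y : X, x ≠ y →
      ∃ δ > 0, ∀ n : ℤ, δ ≤ dist ((T.toEquiv ^ n) x) ((T.toEquiv ^ n) y)) :
    Equivalence (fun u v : {p // p ∈ cubeQ X T m} =>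
      concat u.1 v.1 ∈ cubeQ X T (m + 1)) := by
  classical
  rcases isEmpty_or_nonempty X with hX | hX
  · exact
      { refl := fun u => (IsEmpty.false (u.1 (fun _ => false))).elim
        symm := fun {u v} _ => (IsEmpty.false (u.1 (fun _ => false))).elim
        trans := fun {u v w} _ _ => (IsEmpty.false (u.1 (fun _ => false))).elim }
  · obtain ⟨x₀⟩ := hX
    have hdis : DistalHyp T := hdistal
    refine ⟨fun u => concat_self_mem T u.2, fun {u v} h => concat_symm_mem T h, ?_⟩
    intro u v w huv hvw
    have hP₀c : concat (fun _ : Fin m → Bool => x₀) (fun _ : Fin m → Bool => x₀)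
        = (fun _ : Fin (m+1) → Bool => x₀) := by
      funext ε
      show (if ε (Fin.last m) then x₀ else x₀) = x₀
      rw [ite_self]
    have hQ := cubeQ_eq_image_EE T hmin x₀ (m+1)
    rw [hQ] at huv hvw ⊢
    obtain ⟨p, hpE, hp⟩ := huv
    obtain ⟨q, hqE, hq⟩ := hvw
    -- `hp : p P₀ = concat u v`, `hq : q P₀ = concat v w`
    have hp' : p (concat (fun _ : Fin m → Bool => x₀) (fun _ : Fin m → Bool => x₀))
        = concat u.1 v.1 := by rw [hP₀c]; exact hp
    have hq' : q (concat (fun _ : Fin m → Bool => x₀) (fun _ : Fin m → Bool => x₀))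
        = concat v.1 w.1 := by rw [hP₀c]; exact hq
    -- the doubled lower component of `q`
    have hqbarE := EE_diagdbl T hqE
    obtain ⟨j, hjE, hj1, hj2⟩ := EE_inv hdis hqbarE
    -- `γ c₀ = v` and `δ c₀ = w`
    have hγc₀ : lowF (q (concat (fun _ : Fin m → Bool => x₀) (fun _ : Fin m → Bool => x₀)))
        = v.1 := by rw [hq', lowF_concat]
    have hδc₀ : upF (q (concat (fun _ : Fin m → Bool => x₀) (fun _ : Fin m → Bool => x₀)))
        = w.1 := by rw [hq', upF_concat]
    -- `j (concat v v) = concat c₀ c₀`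
    have hjvv : j (concat v.1 v.1)
        = concat (fun _ : Fin m → Bool => x₀) (fun _ : Fin m → Bool => x₀) := by
      have e3 := congrFun hj1 (concat (fun _ : Fin m → Bool => x₀) (fun _ : Fin m → Bool => x₀))
      have e4 : (fun y => concat
            (lowF (q (concat (lowF y) (lowF y))))
            (lowF (q (concat (upF y) (upF y)))))
            (concat (fun _ : Fin m → Bool => x₀) (fun _ : Fin m → Bool => x₀))
          = concat v.1 v.1 := by
        show concat
            (lowF (q (concat (lowF (concat (fun _ : Fin m → Bool => x₀) (fun _ : Fin m → Bool => x₀)))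
              (lowF (concat (fun _ : Fin m → Bool => x₀) (fun _ : Fin m → Bool => x₀))))))
            (lowF (q (concat (upF (concat (fun _ : Fin m → Bool => x₀) (fun _ : Fin m → Bool => x₀)))
              (upF (concat (fun _ : Fin m → Bool => x₀) (fun _ : Fin m → Bool => x₀))))))
          = concat v.1 v.1
        rw [lowF_concat, upF_concat, hγc₀]
      calc j (concat v.1 v.1) = j ((fun y => concat
            (lowF (q (concat (lowF y) (lowF y))))
            (lowF (q (concat (upF y) (upF y)))))
            (concat (fun _ : Fin m → Bool => x₀) (fun _ : Fin m → Bool => x₀))) := by rw [e4]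
        _ = concat (fun _ : Fin m → Bool => x₀) (fun _ : Fin m → Bool => x₀) := e3
    -- `γ (j⁰ u) = u`
    have hγj0u : lowF (q (concat (lowF (j (concat u.1 u.1))) (lowF (j (concat u.1 u.1)))))
        = u.1 := by
      have e := congrFun hj2 (concat u.1 u.1)
      -- e : qbar (j (concat u u)) = concat u u
      have e' : concat
            (lowF (q (concat (lowF (j (concat u.1 u.1))) (lowF (j (concat u.1 u.1))))))
            (lowF (q (concat (upF (j (concat u.1 u.1))) (upF (j (concat u.1 u.1))))))
          = concat u.1 u.1 := e
      have := congrArg lowF e'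
      rwa [lowF_concat, lowF_concat] at this
    refine ⟨q ∘ (j ∘ p), comp_mem T hqE (comp_mem T hjE hpE), ?_⟩
    show q (j (p (fun _ : Fin (m+1) → Bool => x₀))) = concat u.1 w.1
    rw [← hP₀c, hp']
    rw [EE_split T hjE u.1 v.1]
    rw [show upF (j (concat v.1 v.1)) = (fun _ : Fin m → Bool => x₀) from by
      rw [hjvv, upF_concat]]
    rw [EE_split T hqE (lowF (j (concat u.1 u.1))) (fun _ : Fin m → Bool => x₀)]
    rw [hγj0u, hδc₀]
end
end

section
/- Let (X,T) be a transitive system and d ≥ 1. Points x,y ∈ X are regionally proximal of order d (written (x,y) ∈ RP^[d]) if and only if there exists a_* ∈ X^{2^d − 1} such that the point (x, a_*, y, a_*) ∈ X^{2^{d+1}} belongs to Q^[d+1](X). -/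
open Filter Topology

noncomputable section

def vertex0 (d : ℕ) : Fin d → Bool := fun _ => false

/-- The regionally proximal relation of order `d`. -/
def RP (X : Type*) [MetricSpace X] (T : X ≃ₜ X) (d : ℕ) : Set (X × X) :=
  {p | ∀ δ > 0, ∃ (x' y' : X) (n : Fin d → ℤ),
    dist p.1 x' < δ ∧ dist p.2 y' < δ ∧
    ∀ ε : Fin d → Bool, ε ≠ vertex0 d →
      dist ((T.toEquiv ^ dotP n ε) x') ((T.toEquiv ^ dotP n ε) y') < δ}

/-- The point of `X^{2^{d+1}}` with value `a` at the vertex `∅` and given by `b`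
elsewhere. -/
def set0 {X : Type*} {d : ℕ} (a : X) (b : (Fin d → Bool) → X) : (Fin d → Bool) → X :=
  fun ε => if ε = vertex0 d then a else b ε

/-- The restriction of `ε : {0,1}^{d+1}` to its first `d` coordinates. -/
def front {d : ℕ} (ε : Fin (d + 1) → Bool) : Fin d → Bool := fun i => ε i.castSucc

lemma cont_zpow {X : Type*} [TopologicalSpace X] (T : X ≃ₜ X) (k : ℤ) :
    Continuous fun z : X => (T.toEquiv ^ k) z := by
  induction k using Int.induction_on with
  | zero => simpa using (continuous_id' : Continuous fun z : X => z)
  | succ n ih =>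
      have h : ∀ z : X, (T.toEquiv ^ ((n : ℤ) + 1)) z = (T.toEquiv ^ (n : ℤ)) (T z) := by
        intro z; rw [zpow_add_one]; rfl
      simp only [h]; exact ih.comp T.continuous
  | pred n ih =>
      have h : ∀ z : X, (T.toEquiv ^ (-(n : ℤ) - 1)) z = (T.toEquiv ^ (-(n : ℤ))) (T.symm z) := by
        intro z; rw [zpow_sub_one]; rfl
      simp only [h]; exact ih.comp T.symm.continuous

lemma zpow_add_apply {X : Type*} [TopologicalSpace X] (T : X ≃ₜ X) (a b : ℤ) (z : X) :
    (T.toEquiv ^ (a + b)) z = (T.toEquiv ^ a) ((T.toEquiv ^ b) z) := by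
  rw [zpow_add]; rfl

lemma dotP_succ {d : ℕ} (N : Fin (d + 1) → ℤ) (ε : Fin (d + 1) → Bool) :
    dotP N ε = dotP (fun i => N i.castSucc) (front ε)
      + (if ε (Fin.last d) then N (Fin.last d) else 0) := by
  simp [dotP, Fin.sum_univ_castSucc, front]
  rfl

lemma dotP_vertex0 {d : ℕ} (n : Fin d → ℤ) : dotP n (vertex0 d) = 0 := by
  simp [dotP, vertex0]

lemma front_snoc {d : ℕ} (ε : Fin d → Bool) (b : Bool) : front (Fin.snoc ε b) = ε := by
  funext i; simp [front]

lemma snoc_front {d : ℕ} (ε : Fin (d + 1) → Bool) :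
    Fin.snoc (front ε) (ε (Fin.last d)) = ε := Fin.snoc_init_self ε

lemma vertex0_succ (d : ℕ) : vertex0 (d + 1) = Fin.snoc (vertex0 d) false :=
  (snoc_front (vertex0 (d + 1))).symm

/-- `(x,y) ∈ RP^[d]` iff there exists `a_*` with `(x, a_*, y, a_*) ∈ Q^[d+1]`. -/
theorem RP_iff_cubeQ
    {X : Type*} [MetricSpace X] [CompactSpace X] (T : X ≃ₜ X) (d : ℕ) (hd : 1 ≤ d)
    (htrans : ∃ x : X, Dense (Set.range fun n : ℤ => (T.toEquiv ^ n) x))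
    (x y : X) :
    (x, y) ∈ RP X T d ↔
      ∃ a : (Fin d → Bool) → X,
        (fun ε : Fin (d + 1) → Bool =>
          if front ε = vertex0 d then (if ε (Fin.last d) then y else x)
          else a (front ε)) ∈ cubeQ X T (d + 1) := by
  constructor
  · -- forward direction
    intro h
    obtain ⟨w, hw⟩ := htrans
    -- Step A: witnesses can be taken on the orbit of `w`
    have key : ∀ δ : ℝ, 0 < δ → ∃ (p q : ℤ) (n : Fin d → ℤ),
        dist x ((T.toEquiv ^ p) w) < δ ∧ dist y ((T.toEquiv ^ q) w) < δ ∧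
        ∀ ε : Fin d → Bool, ε ≠ vertex0 d →
          dist ((T.toEquiv ^ (dotP n ε + p)) w) ((T.toEquiv ^ (dotP n ε + q)) w) < δ := by
      intro δ hδ
      obtain ⟨x', y', n, hx', hy', hxy'⟩ := h (δ / 3) (by linarith)
      set F : X → ((Fin d → Bool) → X) := fun z ε => (T.toEquiv ^ dotP n ε) z with hF
      have contF : Continuous F := continuous_pi fun ε => cont_zpow T _
      obtain ⟨η₁, hη₁pos, hη₁⟩ :=
        Metric.continuousAt_iff.mp (contF.continuousAt (x := x')) (δ / 3) (by linarith)
      obtain ⟨η₂, hη₂pos, hη₂⟩ :=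
        Metric.continuousAt_iff.mp (contF.continuousAt (x := y')) (δ / 3) (by linarith)
      obtain ⟨p, hp⟩ := DenseRange.exists_dist_lt hw x'
        (lt_min hη₁pos (by linarith : (0:ℝ) < δ / 3))
      obtain ⟨q, hq⟩ := DenseRange.exists_dist_lt hw y'
        (lt_min hη₂pos (by linarith : (0:ℝ) < δ / 3))
      have hpη : dist ((T.toEquiv ^ p) w) x' < η₁ := by
        rw [dist_comm]; exact hp.trans_le (min_le_left _ _)
      have hqη : dist ((T.toEquiv ^ q) w) y' < η₂ := by
        rw [dist_comm]; exact hq.trans_le (min_le_left _ _)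
      refine ⟨p, q, n, ?_, ?_, ?_⟩
      · calc dist x ((T.toEquiv ^ p) w) ≤ dist x x' + dist x' ((T.toEquiv ^ p) w) :=
              dist_triangle _ _ _
          _ < δ / 3 + δ / 3 := by
              have := hp.trans_le (min_le_right _ _); linarith
          _ < δ := by linarith
      · calc dist y ((T.toEquiv ^ q) w) ≤ dist y y' + dist y' ((T.toEquiv ^ q) w) :=
              dist_triangle _ _ _
          _ < δ / 3 + δ / 3 := by
              have := hq.trans_le (min_le_right _ _); linarith
          _ < δ := by linarith
      · intro ε hε
        have e1 : (T.toEquiv ^ (dotP n ε + p)) w = F ((T.toEquiv ^ p) w) ε := by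
          simp only [hF]; rw [zpow_add_apply]
        have e2 : (T.toEquiv ^ (dotP n ε + q)) w = F ((T.toEquiv ^ q) w) ε := by
          simp only [hF]; rw [zpow_add_apply]
        have b1 : dist (F ((T.toEquiv ^ p) w) ε) (F x' ε) < δ / 3 :=
          (dist_le_pi_dist _ _ ε).trans_lt (hη₁ hpη)
        have b2 : dist (F ((T.toEquiv ^ q) w) ε) (F y' ε) < δ / 3 :=
          (dist_le_pi_dist _ _ ε).trans_lt (hη₂ hqη)
        have b3 : dist (F x' ε) (F y' ε) < δ / 3 := hxy' ε hε
        calc dist ((T.toEquiv ^ (dotP n ε + p)) w) ((T.toEquiv ^ (dotP n ε + q)) w)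
            = dist (F ((T.toEquiv ^ p) w) ε) (F ((T.toEquiv ^ q) w) ε) := by rw [e1, e2]
          _ ≤ dist (F ((T.toEquiv ^ p) w) ε) (F x' ε) + dist (F x' ε) (F y' ε)
              + dist (F y' ε) (F ((T.toEquiv ^ q) w) ε) := dist_triangle4 _ _ _ _
          _ < δ / 3 + δ / 3 + δ / 3 := by
              rw [dist_comm (F y' ε)]; linarith
          _ = δ := by ring
    have key' : ∀ k : ℕ, ∃ (p q : ℤ) (n : Fin d → ℤ),
        dist x ((T.toEquiv ^ p) w) < 1 / ((k : ℝ) + 1) ∧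
        dist y ((T.toEquiv ^ q) w) < 1 / ((k : ℝ) + 1) ∧
        ∀ ε : Fin d → Bool, ε ≠ vertex0 d →
          dist ((T.toEquiv ^ (dotP n ε + p)) w) ((T.toEquiv ^ (dotP n ε + q)) w)
            < 1 / ((k : ℝ) + 1) :=
      fun k => key (1 / ((k : ℝ) + 1)) (by positivity)
    choose p q n h1 h2 h3 using key'
    set c : ℕ → ((Fin (d + 1) → Bool) → X) := fun k ε =>
      (T.toEquiv ^ (dotP (n k) (front ε) + if ε (Fin.last d) then q k else p k)) w with hc
    have hck : ∀ k ε, c k ε =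
        (T.toEquiv ^ (dotP (n k) (front ε) + if ε (Fin.last d) then q k else p k)) w :=
      fun _ _ => rfl
    set S : Set ((Fin (d + 1) → Bool) → X) :=
      {y | ∃ (z : X) (N : Fin (d + 1) → ℤ), y = fun ε => (T.toEquiv ^ dotP N ε) z} with hS
    have hcS : ∀ k, c k ∈ S := by
      intro k
      refine ⟨(T.toEquiv ^ p k) w, Fin.snoc (n k) (q k - p k), ?_⟩
      funext ε
      rw [hck]
      rw [dotP_succ (Fin.snoc (n k) (q k - p k)) ε]
      have hfn : (fun i : Fin d =>
          (Fin.snoc (n k) (q k - p k) : Fin (d + 1) → ℤ) i.castSucc) = n k := by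
        funext i; simp
      rw [hfn, Fin.snoc_last, ← zpow_add_apply]
      congr 1
      by_cases hb : ε (Fin.last d) <;> simp [hb] <;> ring
    -- extract a convergent subsequence
    obtain ⟨cl, -, φ, hφ, hcl⟩ := isCompact_univ.tendsto_subseq
      (x := c) (fun k => Set.mem_univ _)
    have hcoord : ∀ ε, Tendsto (fun k => c (φ k) ε) atTop (𝓝 (cl ε)) := fun ε =>
      tendsto_pi_nhds.mp hcl ε
    have hb : ∀ k : ℕ, 1 / ((φ k : ℝ) + 1) ≤ 1 / ((k : ℝ) + 1) := by
      intro k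
      apply one_div_le_one_div_of_le (by positivity)
      have : k ≤ φ k := hφ.le_apply
      exact_mod_cast Nat.succ_le_succ this
    have hnull : Tendsto (fun k : ℕ => 1 / ((k : ℝ) + 1)) atTop (𝓝 0) :=
      tendsto_one_div_add_atTop_nhds_zero_nat
    -- value of the limit at the base vertex
    have hcε₀ : ∀ k, c k (vertex0 (d + 1)) = (T.toEquiv ^ p k) w := by
      intro k
      have h1' : front (vertex0 (d + 1)) = vertex0 d := rfl
      have h2' : vertex0 (d + 1) (Fin.last d) = false := rfl
      rw [hck, h1', h2', dotP_vertex0]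
      simp
    have hcε₁ : ∀ k, c k (Fin.snoc (vertex0 d) true) = (T.toEquiv ^ q k) w := by
      intro k
      rw [hck, front_snoc, Fin.snoc_last, dotP_vertex0]
      simp
    have hxlim : cl (vertex0 (d + 1)) = x := by
      refine tendsto_nhds_unique (hcoord _) ?_
      rw [tendsto_iff_dist_tendsto_zero]
      refine squeeze_zero (fun _ => dist_nonneg) (fun k => ?_) hnull
      rw [hcε₀, dist_comm]
      exact ((h1 (φ k)).le).trans (hb k)
    have hylim : cl (Fin.snoc (vertex0 d) true) = y := by
      refine tendsto_nhds_unique (hcoord _) ?_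
      rw [tendsto_iff_dist_tendsto_zero]
      refine squeeze_zero (fun _ => dist_nonneg) (fun k => ?_) hnull
      rw [hcε₁, dist_comm]
      exact ((h2 (φ k)).le).trans (hb k)
    have hsame : ∀ ε' : Fin d → Bool, ε' ≠ vertex0 d →
        cl (Fin.snoc ε' true) = cl (Fin.snoc ε' false) := by
      intro ε' hne
      have hc1 : ∀ k, c k (Fin.snoc ε' true) =
          (T.toEquiv ^ (dotP (n k) ε' + q k)) w := by
        intro k; rw [hck, front_snoc, Fin.snoc_last]; simp
      have hc2 : ∀ k, c k (Fin.snoc ε' false) =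
          (T.toEquiv ^ (dotP (n k) ε' + p k)) w := by
        intro k; rw [hck, front_snoc, Fin.snoc_last]; simp
      have hdist : ∀ k, dist (c k (Fin.snoc ε' true)) (c k (Fin.snoc ε' false))
          ≤ 1 / ((k : ℝ) + 1) := by
        intro k
        rw [hc1, hc2, dist_comm]
        exact (h3 k ε' hne).le
      have ht : Tendsto
          (fun k => dist (c (φ k) (Fin.snoc ε' true)) (c (φ k) (Fin.snoc ε' false)))
          atTop (𝓝 (dist (cl (Fin.snoc ε' true)) (cl (Fin.snoc ε' false)))) :=
        (hcoord _).dist (hcoord _)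
      have h0 : Tendsto
          (fun k => dist (c (φ k) (Fin.snoc ε' true)) (c (φ k) (Fin.snoc ε' false)))
          atTop (𝓝 0) :=
        squeeze_zero (fun _ => dist_nonneg) (fun k => (hdist (φ k)).trans (hb k)) hnull
      exact dist_eq_zero.mp (tendsto_nhds_unique ht h0)
    refine ⟨fun ε' => cl (Fin.snoc ε' false), ?_⟩
    have heq : (fun ε : Fin (d + 1) → Bool =>
        if front ε = vertex0 d then (if ε (Fin.last d) then y else x)
        else cl (Fin.snoc (front ε) false)) = cl := by
      funext ε
      by_cases hf : front ε = vertex0 d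
      · by_cases hl : ε (Fin.last d)
        · rw [if_pos hf, if_pos hl]
          have hε : ε = Fin.snoc (vertex0 d) true := by
            rw [← snoc_front ε, hf, hl]
          rw [hε, hylim]
        · rw [if_pos hf, if_neg hl]
          have hl' : ε (Fin.last d) = false := by
            cases hb : ε (Fin.last d)
            · rfl
            · exact absurd hb hl
          have hε : ε = vertex0 (d + 1) := by
            rw [← snoc_front ε, hf, hl', ← vertex0_succ]
          rw [hε, hxlim]
      · rw [if_neg hf]
        by_cases hl : ε (Fin.last d)
        · have hε : ε = Fin.snoc (front ε) true := by
            conv_lhs => rw [← snoc_front ε]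
            rw [hl]
          rw [← hsame (front ε) hf, ← hε]
        · have hl' : ε (Fin.last d) = false := by
            cases hb : ε (Fin.last d)
            · rfl
            · exact absurd hb hl
          have hε : ε = Fin.snoc (front ε) false := by
            conv_lhs => rw [← snoc_front ε]
            rw [hl']
          rw [← hε]
    rw [heq]
    exact mem_closure_of_tendsto hcl (Eventually.of_forall fun k => hcS (φ k))
  · -- backward direction
    rintro ⟨a, ha⟩ δ hδ
    obtain ⟨s, hsS, hs⟩ := Metric.mem_closure_iff.mp ha (δ / 3) (by linarith)
    obtain ⟨z, N, rfl⟩ := hsS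
    have hco : ∀ ε : Fin (d + 1) → Bool,
        dist (if front ε = vertex0 d then (if ε (Fin.last d) then y else x)
          else a (front ε)) ((T.toEquiv ^ dotP N ε) z) < δ / 3 :=
      fun ε => (dist_le_pi_dist _ _ ε).trans_lt hs
    refine ⟨z, (T.toEquiv ^ N (Fin.last d)) z, fun i => N i.castSucc, ?_, ?_, ?_⟩
    · have h0 := hco (vertex0 (d + 1))
      have h1' : front (vertex0 (d + 1)) = vertex0 d := rfl
      have h2' : vertex0 (d + 1) (Fin.last d) = false := rfl
      rw [h1', h2', dotP_vertex0] at h0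
      simp only [if_pos rfl] at h0
      simp only [zpow_zero, Equiv.Perm.coe_one, id_eq] at h0
      simp only [Bool.false_eq_true, if_false] at h0
      calc dist x z < δ / 3 := h0
        _ < δ := by linarith
    · have h0 := hco (Fin.snoc (vertex0 d) true)
      rw [dotP_succ, front_snoc, Fin.snoc_last] at h0
      rw [dotP_vertex0] at h0
      simp only [if_pos rfl, if_true, zero_add] at h0
      calc dist y ((T.toEquiv ^ N (Fin.last d)) z) < δ / 3 := h0
        _ < δ := by linarith
    · intro ε hε
      have hf := hco (Fin.snoc ε false)
      have htr := hco (Fin.snoc ε true)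
      rw [dotP_succ, front_snoc, Fin.snoc_last] at hf htr
      rw [if_neg hε] at hf htr
      simp only [if_true, Bool.false_eq_true, if_false, add_zero] at hf htr
      have hey : (T.toEquiv ^ dotP (fun i => N i.castSucc) ε)
          ((T.toEquiv ^ N (Fin.last d)) z)
          = (T.toEquiv ^ (dotP (fun i => N i.castSucc) ε + N (Fin.last d))) z :=
        (zpow_add_apply T _ _ z).symm
      rw [hey]
      calc dist ((T.toEquiv ^ dotP (fun i => N i.castSucc) ε) z)
            ((T.toEquiv ^ (dotP (fun i => N i.castSucc) ε + N (Fin.last d))) z)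
          ≤ dist ((T.toEquiv ^ dotP (fun i => N i.castSucc) ε) z) (a ε)
            + dist (a ε) ((T.toEquiv ^ (dotP (fun i => N i.castSucc) ε + N (Fin.last d))) z) :=
            dist_triangle _ _ _
        _ < δ / 3 + δ / 3 := by
            rw [dist_comm _ (a ε)]; exact add_lt_add hf htr
        _ < δ := by linarith
end
end
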